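/- Let P = (p_1, …, p_n) be a finite linearly ordered set, let ℓ : P → {1,2,3} be a labeling ('true site') and D : P → {L, R} ('direction'). For i < j in {1,2,3}, say v ∈ P left-likes site i relative to the pair {i,j} if ℓ(v) = i, or D(v) = R, or ℓ(v) ∉ {i,j}. Suppose for each pair {i,j} (i<j) we are given a partition of P into a prefix P^{ij}_i and suffix P^{ij}_j such that every element of P^{ij}_i left-likes i relative to {i,j} and every element of P^{ij}_j left-likes j relative to {i,j}. If P^{12}_2 ∩ P^{23}_2 = ∅, then every v ∈ P^{13}_1 satisfies ℓ(v) = 1 or D(v) = R, and every v ∈ P^{13}_3 satisfies ℓ(v) = 3 or D(v) = R. -/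
import Mathlib


/-- The direction (left or right) from which a shortest path enters the separator path. -/
inductive Dir | L | R
deriving DecidableEq

/-- `v` left-likes site `i` relative to the pair `{i, j}`: its true site is `i`, or its
shortest path enters from the right, or its true site is outside the pair. -/
def leftLikes {P : Type} (ℓ : P → Fin 3) (D : P → Dir) (i j : Fin 3) (v : P) : Prop :=
  ℓ v = i ∨ D v = Dir.R ∨ (ℓ v ≠ i ∧ ℓ v ≠ j)

/-- Combining pairwise relaxed partitions: in the case `P^{12}_2 ∩ P^{23}_2 = ∅`, the two
parts of the `(1,3)`-partition are correct for the full set of three sites.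
(Sites `1,2,3` are represented by `0,1,2 : Fin 3`.) -/
theorem stmt10 {P : Type} [LinearOrder P]
    (ℓ : P → Fin 3) (D : P → Dir)
    (A12 B12 A23 B23 A13 B13 : Set P)
    (h12u : A12 ∪ B12 = Set.univ) (h12d : Disjoint A12 B12)
    (h12p : ∀ a b : P, a ≤ b → b ∈ A12 → a ∈ A12)
    (h12A : ∀ v ∈ A12, leftLikes ℓ D 0 1 v) (h12B : ∀ v ∈ B12, leftLikes ℓ D 1 0 v)
    (h23u : A23 ∪ B23 = Set.univ) (h23d : Disjoint A23 B23)
    (h23p : ∀ a b : P, a ≤ b → b ∈ A23 → a ∈ A23)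
    (h23A : ∀ v ∈ A23, leftLikes ℓ D 1 2 v) (h23B : ∀ v ∈ B23, leftLikes ℓ D 2 1 v)
    (h13u : A13 ∪ B13 = Set.univ) (h13d : Disjoint A13 B13)
    (h13p : ∀ a b : P, a ≤ b → b ∈ A13 → a ∈ A13)
    (h13A : ∀ v ∈ A13, leftLikes ℓ D 0 2 v) (h13B : ∀ v ∈ B13, leftLikes ℓ D 2 0 v)
    (hempty : B12 ∩ A23 = ∅) :
    (∀ v ∈ A13, ℓ v = 0 ∨ D v = Dir.R) ∧ (∀ v ∈ B13, ℓ v = 2 ∨ D v = Dir.R) := by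
  have key : ∀ v : P, ℓ v = 1 → D v = Dir.R := by
    intro v hv
    have hmem : v ∈ A12 ∪ B12 := h12u ▸ Set.mem_univ v
    rcases hmem with h | h
    · rcases h12A v h with h0 | hR | ⟨_, h1⟩
      · rw [hv] at h0; exact absurd h0 (by decide)
      · exact hR
      · exact absurd hv h1
    · have hn : v ∉ A23 := fun hA => Set.eq_empty_iff_forall_notMem.mp hempty v ⟨h, hA⟩
      have hB : v ∈ B23 := by
        have : v ∈ A23 ∪ B23 := h23u ▸ Set.mem_univ v
        rcases this with h' | h'
        · exact absurd h' hn
        · exact h'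
      rcases h23B v hB with h2 | hR | ⟨_, h1⟩
      · rw [hv] at h2; exact absurd h2 (by decide)
      · exact hR
      · exact absurd hv h1
  constructor
  · intro v hv
    rcases h13A v hv with h0 | hR | ⟨h0, h2⟩
    · exact Or.inl h0
    · exact Or.inr hR
    · right; apply key; omega
  · intro v hv
    rcases h13B v hv with h2 | hR | ⟨h2, h0⟩
    · left
      have := Fin.isLt (ℓ v)
      omega
    · exact Or.inr hR
    · right; apply key; omega
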